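/- arXiv:2506.04531 — 2 statements merged into one kernel-verified Lean document; each statement's English description precedes it below -/
import Mathlib

section
/- Let E be a real inner product space and F : E → ℝ a differentiable function whose gradient ∇F is L-Lipschitz for some L > 0, and suppose F is bounded below: F(x) ≥ F_* for all x ∈ E. Fix β ∈ (0,1) and set γ = 1 + β²/(1−β). Let Θ, g, m : ℕ → E and η : ℕ → ℝ satisfy m_0 = 0, m_{t+1} = β·m_t + g_t, Θ_{t+1} = Θ_t − η_t·((1−β)·g_t + β·m_{t+1}), with 0 < η_m ≤ η_t ≤ η_0 ≤ (γ−β²)/(6Lγ²) for all t. Suppose there is B ≥ 0 such that for all t, ‖g_t − ∇F(Θ_t)‖² ≤ B and ‖m_t − g_t/(1−β)‖² ≤ B. Then for every T ≥ 1: min over 0 ≤ t < T of ‖∇F(Θ_t)‖² ≤ 4(F(Θ_0) − F_*)/(η_m·(γ−β²)·T) + (2η_0·(γ+β²) + 6L·η_0²·(γ²+β⁴))·B/(η_m·(γ−β²)). -/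
open Finset

open intervalIntegral in
lemma descent_lemma {E : Type*} [NormedAddCommGroup E] [InnerProductSpace ℝ E] [CompleteSpace E]
    (F : E → ℝ) (L : ℝ) (hL : 0 ≤ L) (hF : Differentiable ℝ F)
    (hLip : ∀ x y : E, ‖gradient F x - gradient F y‖ ≤ L * ‖x - y‖) (x y : E) :
    F y ≤ F x + inner ℝ (gradient F x) (y - x) + L / 2 * ‖y - x‖ ^ 2 := by
  set c : ℝ → E := fun t => x + t • (y - x) with hc
  have hcd : ∀ t : ℝ, HasDerivAt c (y - x) t := by
    intro t
    simpa [hc] using ((hasDerivAt_id t).smul_const (y - x)).const_add x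
  have hd : ∀ t : ℝ, HasDerivAt (fun s => F (c s)) (inner ℝ (gradient F (c t)) (y - x) : ℝ) t := by
    intro t
    have h1 : HasFDerivAt F (InnerProductSpace.toDual ℝ E (gradient F (c t))) (c t) :=
      ((hF (c t)).hasGradientAt).hasFDerivAt
    simpa [InnerProductSpace.toDual_apply_apply, Function.comp_def] using h1.comp_hasDerivAt t (hcd t)
  have hgradcont : Continuous (gradient F) := by
    refine (LipschitzWith.of_dist_le_mul (K := Real.toNNReal L) ?_).continuous
    intro a b
    simpa [dist_eq_norm, Real.coe_toNNReal L hL] using hLip a b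
  have hccont : Continuous c := by
    exact continuous_const.add (continuous_id.smul continuous_const)
  have hcont : Continuous fun t : ℝ => (inner ℝ (gradient F (c t)) (y - x) : ℝ) :=
    (hgradcont.comp hccont).inner continuous_const
  have hftc : ∫ t in (0:ℝ)..1, (inner ℝ (gradient F (c t)) (y - x) : ℝ) = F (c 1) - F (c 0) := by
    exact integral_eq_sub_of_hasDerivAt (fun t _ => hd t) (hcont.intervalIntegrable _ _)
  have hc0 : c 0 = x := by simp [hc]
  have hc1 : c 1 = y := by simp [hc]
  have hmono : ∫ t in (0:ℝ)..1, (inner ℝ (gradient F (c t)) (y - x) : ℝ)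
      ≤ ∫ t in (0:ℝ)..1, (inner ℝ (gradient F x) (y - x) + L * t * ‖y - x‖ ^ 2 : ℝ) := by
    apply integral_mono_on (by norm_num) (hcont.intervalIntegrable _ _)
    · exact ((continuous_const.add ((continuous_const.mul continuous_id).mul
        continuous_const))).intervalIntegrable _ _
    · intro t ht
      rcases ht with ⟨ht0, ht1⟩
      have h1 : (inner ℝ (gradient F (c t) - gradient F x) (y - x) : ℝ)
          ≤ ‖gradient F (c t) - gradient F x‖ * ‖y - x‖ := real_inner_le_norm _ _
      have h2 : ‖gradient F (c t) - gradient F x‖ ≤ L * ‖c t - x‖ := hLip _ _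
      have h3 : ‖c t - x‖ = t * ‖y - x‖ := by
        simp [hc, norm_smul, abs_of_nonneg ht0]
      have h4 : (inner ℝ (gradient F (c t)) (y - x) : ℝ)
          = inner ℝ (gradient F x) (y - x) + inner ℝ (gradient F (c t) - gradient F x) (y - x) := by
        rw [← inner_add_left]
        congr 1
        abel
      rw [h4]
      have h5 : ‖gradient F (c t) - gradient F x‖ * ‖y - x‖ ≤ L * t * ‖y - x‖ ^ 2 := by
        have := mul_le_mul_of_nonneg_right h2 (norm_nonneg (y - x))
        rw [h3] at this
        nlinarith [norm_nonneg (y - x)]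
      linarith
  have hrhs : ∫ t in (0:ℝ)..1, (inner ℝ (gradient F x) (y - x) + L * t * ‖y - x‖ ^ 2 : ℝ)
      = inner ℝ (gradient F x) (y - x) + L / 2 * ‖y - x‖ ^ 2 := by
    have h1 : (fun t : ℝ => (inner ℝ (gradient F x) (y - x) + L * t * ‖y - x‖ ^ 2 : ℝ))
        = fun t : ℝ => (inner ℝ (gradient F x) (y - x) : ℝ) + (L * ‖y - x‖ ^ 2) * t := by
      funext t; ring
    rw [h1, integral_add intervalIntegrable_const (intervalIntegrable_id.const_mul _),
      integral_const, integral_const_mul, integral_id]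
    simp
    ring
  rw [hc0, hc1] at hftc
  linarith [hmono.trans_eq hrhs, hftc.symm.le, hftc.le]

open Finset

lemma aux_amgm (i a b : ℝ) (h : |i| ≤ a * b) : -((a ^ 2 + b ^ 2) / 2) ≤ i := by
  have := neg_abs_le i
  nlinarith [sq_nonneg (a - b)]

lemma aux_Ilb (γ β a d e i1 i2 : ℝ) (hγ : 0 ≤ γ) (hβ : 0 ≤ β ^ 2)
    (h1 : -((a ^ 2 + d ^ 2) / 2) ≤ i1) (h2 : -((a ^ 2 + e ^ 2) / 2) ≤ i2) :
    (γ - β ^ 2) / 2 * a ^ 2 - γ / 2 * d ^ 2 - β ^ 2 / 2 * e ^ 2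
      ≤ γ * a ^ 2 + γ * i1 + β ^ 2 * i2 := by
  nlinarith [mul_le_mul_of_nonneg_left h1 hγ, mul_le_mul_of_nonneg_left h2 hβ]

lemma aux_sq3 (a b c v : ℝ) (hv : 0 ≤ v) (h : v ≤ a + b + c) :
    v ^ 2 ≤ 3 * (a ^ 2 + b ^ 2 + c ^ 2) := by
  nlinarith [sq_nonneg (a - b), sq_nonneg (b - c), sq_nonneg (a - c),
    pow_le_pow_left₀ hv h 2]

set_option maxHeartbeats 1000000 in
lemma aux_step (L γ β ηm η0 ηt B F0 F1 a d e I V : ℝ)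
    (hL : 0 < L) (hβ2 : 0 < β ^ 2) (hγβ : 0 < γ - β ^ 2) (hγpos : 0 < γ)
    (hηm : 0 < ηm) (hlb : ηm ≤ ηt) (hub : ηt ≤ η0)
    (hη0' : 6 * L * γ ^ 2 * η0 ≤ γ - β ^ 2)
    (hdB : d ^ 2 ≤ B) (heB : e ^ 2 ≤ B) (hB : 0 ≤ B)
    (hI : (γ - β ^ 2) / 2 * a ^ 2 - γ / 2 * d ^ 2 - β ^ 2 / 2 * e ^ 2 ≤ I)
    (hV : V ≤ 3 * (γ ^ 2 * a ^ 2 + γ ^ 2 * d ^ 2 + β ^ 4 * e ^ 2))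
    (hdesc : F1 ≤ F0 + -(ηt * I) + L / 2 * (ηt ^ 2 * V)) :
    F1 + ηm * (γ - β ^ 2) / 4 * a ^ 2
      ≤ F0 + (η0 * (γ + β ^ 2) / 2 + 3 / 2 * L * η0 ^ 2 * (γ ^ 2 + β ^ 4)) * B := by
  have hηt0 : 0 < ηt := lt_of_lt_of_le hηm hlb
  have hη0pos : 0 < η0 := lt_of_lt_of_le hηt0 hub
  have h6pos : (0:ℝ) < 6 * L * γ ^ 2 := by positivity
  have hcoef : ηm * (γ - β ^ 2) / 4
      ≤ ηt * ((γ - β ^ 2) / 2 - 3 * L / 2 * ηt * γ ^ 2) := by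
    have h1 : 6 * L * γ ^ 2 * ηt ≤ 6 * L * γ ^ 2 * η0 :=
      mul_le_mul_of_nonneg_left hub (le_of_lt h6pos)
    have h2 : (γ - β ^ 2) / 4 ≤ (γ - β ^ 2) / 2 - 3 * L / 2 * ηt * γ ^ 2 := by linarith
    calc ηm * (γ - β ^ 2) / 4 = ηm * ((γ - β ^ 2) / 4) := by ring
      _ ≤ ηt * ((γ - β ^ 2) / 2 - 3 * L / 2 * ηt * γ ^ 2) :=
        mul_le_mul hlb h2 (by linarith) (le_of_lt hηt0)
  have key3 := mul_le_mul_of_nonneg_right hcoef (sq_nonneg a)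
  have key1 := mul_le_mul_of_nonneg_left hI (le_of_lt hηt0)
  have key2 := mul_le_mul_of_nonneg_left hV (by positivity : (0:ℝ) ≤ L / 2 * ηt ^ 2)
  have hd2 : 0 ≤ d ^ 2 := sq_nonneg d
  have he2 : 0 ≤ e ^ 2 := sq_nonneg e
  have hterm2 : ηt * (γ / 2 * d ^ 2 + β ^ 2 / 2 * e ^ 2) ≤ η0 * (γ + β ^ 2) / 2 * B := by
    have h1 : γ / 2 * d ^ 2 + β ^ 2 / 2 * e ^ 2 ≤ (γ + β ^ 2) / 2 * B := by
      have h1a := mul_le_mul_of_nonneg_left hdB (by positivity : (0:ℝ) ≤ γ / 2)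
      have h1b := mul_le_mul_of_nonneg_left heB (by positivity : (0:ℝ) ≤ β ^ 2 / 2)
      linarith
    calc ηt * (γ / 2 * d ^ 2 + β ^ 2 / 2 * e ^ 2) ≤ η0 * ((γ + β ^ 2) / 2 * B) :=
          mul_le_mul hub h1 (by positivity) (le_of_lt hη0pos)
      _ = η0 * (γ + β ^ 2) / 2 * B := by ring
  have hterm3 : 3 * L / 2 * ηt ^ 2 * (γ ^ 2 * d ^ 2 + β ^ 4 * e ^ 2)
      ≤ 3 / 2 * L * η0 ^ 2 * (γ ^ 2 + β ^ 4) * B := by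
    have h1 : ηt ^ 2 ≤ η0 ^ 2 := pow_le_pow_left₀ (le_of_lt hηt0) hub 2
    have h2 : γ ^ 2 * d ^ 2 + β ^ 4 * e ^ 2 ≤ (γ ^ 2 + β ^ 4) * B := by
      have h2a := mul_le_mul_of_nonneg_left hdB (by positivity : (0:ℝ) ≤ γ ^ 2)
      have h2b := mul_le_mul_of_nonneg_left heB (by positivity : (0:ℝ) ≤ β ^ 4)
      linarith
    calc 3 * L / 2 * ηt ^ 2 * (γ ^ 2 * d ^ 2 + β ^ 4 * e ^ 2)
        ≤ 3 * L / 2 * η0 ^ 2 * ((γ ^ 2 + β ^ 4) * B) :=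
          mul_le_mul (mul_le_mul_of_nonneg_left h1 (by positivity)) h2
            (by positivity) (by positivity)
      _ = 3 / 2 * L * η0 ^ 2 * (γ ^ 2 + β ^ 4) * B := by ring
  linarith [key1, key2, key3, hterm2, hterm3, hdesc]


set_option maxHeartbeats 4000000 in
/-- Convergence of the HALoS global-server momentum recursion (Theorem 1, descent form). -/
theorem halos_convergence
    {E : Type*} [NormedAddCommGroup E] [InnerProductSpace ℝ E] [CompleteSpace E]
    (F : E → ℝ) (L : ℝ) (hL : 0 < L)
    (hF : Differentiable ℝ F)
    (hLip : ∀ x y : E, ‖gradient F x - gradient F y‖ ≤ L * ‖x - y‖)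
    (Fstar : ℝ) (hbdd : ∀ x : E, F x ≥ Fstar)
    (β : ℝ) (hβ0 : 0 < β) (hβ1 : β < 1)
    (γ : ℝ) (hγ : γ = 1 + β ^ 2 / (1 - β))
    (Θ g m : ℕ → E) (η : ℕ → ℝ) (ηm η0 : ℝ)
    (hm0 : m 0 = 0)
    (hmrec : ∀ t : ℕ, m (t + 1) = β • m t + g t)
    (hΘrec : ∀ t : ℕ, Θ (t + 1) = Θ t - η t • ((1 - β) • g t + β • m (t + 1)))
    (hηm : 0 < ηm)
    (hηlb : ∀ t : ℕ, ηm ≤ η t) (hηub : ∀ t : ℕ, η t ≤ η0)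
    (hη0 : η0 ≤ (γ - β ^ 2) / (6 * L * γ ^ 2))
    (B : ℝ) (hB : 0 ≤ B)
    (hg : ∀ t : ℕ, ‖g t - gradient F (Θ t)‖ ^ 2 ≤ B)
    (hmom : ∀ t : ℕ, ‖m t - (1 - β)⁻¹ • g t‖ ^ 2 ≤ B) :
    ∀ T : ℕ, ∀ _hT : 1 ≤ T,
      (Finset.range T).inf' (Finset.nonempty_range_iff.mpr (by omega))
          (fun t => ‖gradient F (Θ t)‖ ^ 2)
        ≤ 4 * (F (Θ 0) - Fstar) / (ηm * (γ - β ^ 2) * T)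
          + (2 * η0 * (γ + β ^ 2) + 6 * L * η0 ^ 2 * (γ ^ 2 + β ^ 4)) * B
            / (ηm * (γ - β ^ 2)) := by
  intro T hT
  have hβ' : (0:ℝ) < 1 - β := by linarith
  have hβ2 : (0:ℝ) < β ^ 2 := by positivity
  have hγ1 : (1:ℝ) ≤ γ := by
    rw [hγ]; nlinarith [div_nonneg (le_of_lt hβ2) (le_of_lt hβ')]
  have hγβ : (0:ℝ) < γ - β ^ 2 := by
    have h1 : β ^ 2 ≤ β ^ 2 / (1 - β) := by
      rw [le_div_iff₀ hβ']; nlinarith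
    rw [hγ]; linarith
  have hγpos : (0:ℝ) < γ := by linarith
  have hη0pos : (0:ℝ) < η0 := lt_of_lt_of_le hηm ((hηlb 0).trans (hηub 0))
  have h6pos : (0:ℝ) < 6 * L * γ ^ 2 := by positivity
  have hη0' : 6 * L * γ ^ 2 * η0 ≤ γ - β ^ 2 := by
    have := (le_div_iff₀ h6pos).mp hη0
    linarith
  set A : ℕ → ℝ := fun t => ‖gradient F (Θ t)‖ ^ 2 with hA
  set K : ℝ := η0 * (γ + β ^ 2) / 2 + 3 / 2 * L * η0 ^ 2 * (γ ^ 2 + β ^ 4) with hK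
  set cc : ℝ := ηm * (γ - β ^ 2) / 4 with hcc
  -- per-step descent
  have step : ∀ t : ℕ, F (Θ (t + 1)) + cc * A t ≤ F (Θ t) + K * B := by
    intro t
    set G0 : E := gradient F (Θ t) with hG0
    set δ : E := g t - G0 with hδ
    set e : E := m t - (1 - β)⁻¹ • g t with he
    set v : E := γ • G0 + (γ • δ + β ^ 2 • e) with hv
    have hveq : (1 - β) • g t + β • m (t + 1) = v := by
      rw [hmrec t, hv, hδ, he]
      have hc1 : γ - β ^ 2 * (1 - β)⁻¹ = 1 := by
        rw [hγ]; field_simp; ring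
      match_scalars <;> (try ring) <;> linarith [hc1]
    have hΘd : Θ (t + 1) - Θ t = -(η t • v) := by
      rw [hΘrec t, hveq]; abel
    have hdesc : F (Θ (t + 1)) ≤ F (Θ t) + inner ℝ G0 (Θ (t + 1) - Θ t)
        + L / 2 * ‖Θ (t + 1) - Θ t‖ ^ 2 :=
      descent_lemma F L (le_of_lt hL) hF hLip (Θ t) (Θ (t + 1))
    have hηt0 : 0 < η t := lt_of_lt_of_le hηm (hηlb t)
    have hinner : (inner ℝ G0 (Θ (t + 1) - Θ t) : ℝ) = -(η t * inner ℝ G0 v) := by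
      rw [hΘd, inner_neg_right, real_inner_smul_right]
    have hnormd : ‖Θ (t + 1) - Θ t‖ ^ 2 = η t ^ 2 * ‖v‖ ^ 2 := by
      rw [hΘd, norm_neg, norm_smul, Real.norm_eq_abs, abs_of_pos hηt0, mul_pow]
    -- inner product expansion and bound
    have hIv : (inner ℝ G0 v : ℝ) = γ * ‖G0‖ ^ 2 + γ * inner ℝ G0 δ + β ^ 2 * inner ℝ G0 e := by
      rw [hv, inner_add_right, inner_add_right, real_inner_smul_right,
        real_inner_smul_right, real_inner_smul_right, real_inner_self_eq_norm_sq]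
      ring
    have hbd1 : -((‖G0‖ ^ 2 + ‖δ‖ ^ 2) / 2) ≤ (inner ℝ G0 δ : ℝ) :=
      aux_amgm _ _ _ (abs_real_inner_le_norm G0 δ)
    have hbd2 : -((‖G0‖ ^ 2 + ‖e‖ ^ 2) / 2) ≤ (inner ℝ G0 e : ℝ) :=
      aux_amgm _ _ _ (abs_real_inner_le_norm G0 e)
    have hIlb : (γ - β ^ 2) / 2 * ‖G0‖ ^ 2 - γ / 2 * ‖δ‖ ^ 2 - β ^ 2 / 2 * ‖e‖ ^ 2
        ≤ (inner ℝ G0 v : ℝ) := by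
      rw [hIv]
      exact aux_Ilb _ _ _ _ _ _ _ (le_of_lt hγpos) (le_of_lt hβ2) hbd1 hbd2
    have hnv : ‖v‖ ^ 2 ≤ 3 * ((γ * ‖G0‖) ^ 2 + (γ * ‖δ‖) ^ 2 + (β ^ 2 * ‖e‖) ^ 2) := by
      refine aux_sq3 _ _ _ _ (norm_nonneg v) ?_
      have h1 : ‖v‖ ≤ γ * ‖G0‖ + (γ * ‖δ‖ + β ^ 2 * ‖e‖) := by
        rw [hv]
        refine (norm_add_le _ _).trans ?_
        gcongr
        · rw [norm_smul, Real.norm_eq_abs, abs_of_pos hγpos]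
        refine (norm_add_le _ _).trans ?_
        gcongr
        · rw [norm_smul, Real.norm_eq_abs, abs_of_pos hγpos]
        · rw [norm_smul, Real.norm_eq_abs, abs_of_pos hβ2]
      linarith
    have hnv' : ‖v‖ ^ 2 ≤ 3 * (γ ^ 2 * ‖G0‖ ^ 2 + γ ^ 2 * ‖δ‖ ^ 2 + β ^ 4 * ‖e‖ ^ 2) := by
      calc ‖v‖ ^ 2 ≤ 3 * ((γ * ‖G0‖) ^ 2 + (γ * ‖δ‖) ^ 2 + (β ^ 2 * ‖e‖) ^ 2) := hnv
        _ = 3 * (γ ^ 2 * ‖G0‖ ^ 2 + γ ^ 2 * ‖δ‖ ^ 2 + β ^ 4 * ‖e‖ ^ 2) := by ring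
    rw [hinner, hnormd] at hdesc
    have hdesc' : F (Θ (t + 1)) ≤ F (Θ t) + -(η t * inner ℝ G0 v)
        + L / 2 * (η t ^ 2 * ‖v‖ ^ 2) := by linarith
    have := aux_step L γ β ηm η0 (η t) B (F (Θ t)) (F (Θ (t + 1))) ‖G0‖ ‖δ‖ ‖e‖
      (inner ℝ G0 v) (‖v‖ ^ 2) hL hβ2 hγβ hγpos hηm (hηlb t) (hηub t) hη0'
      (hg t) (hmom t) hB hIlb hnv' hdesc'
    rw [hK, hcc]
    exact this
  -- telescoping sum
  have hsum : ∀ n : ℕ, F (Θ n) + cc * ∑ t ∈ range n, A t ≤ F (Θ 0) + n * (K * B) := by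
    intro n
    induction n with
    | zero => simp
    | succ k ih =>
      rw [Finset.sum_range_succ]
      push_cast
      have := step k
      nlinarith
  have hccpos : (0:ℝ) < cc := by rw [hcc]; positivity
  have hTpos : (0:ℝ) < (T:ℝ) := by exact_mod_cast Nat.lt_of_lt_of_le Nat.zero_lt_one hT
  set I : ℝ := (Finset.range T).inf' (Finset.nonempty_range_iff.mpr (by omega))
      (fun t => ‖gradient F (Θ t)‖ ^ 2) with hI
  have hImin : (T:ℝ) * I ≤ ∑ t ∈ range T, A t := by
    have h1 := Finset.card_nsmul_le_sum (range T) A I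
      (fun i hi => Finset.inf'_le _ hi)
    rwa [Finset.card_range, nsmul_eq_mul] at h1
  have hchain : cc * ((T:ℝ) * I) ≤ F (Θ 0) - Fstar + (T:ℝ) * (K * B) := by
    have h1 := hsum T
    have h2 := hbdd (Θ T)
    have h3 := mul_le_mul_of_nonneg_left hImin (le_of_lt hccpos)
    linarith
  set D : ℝ := ηm * (γ - β ^ 2) with hD
  have hDpos : (0:ℝ) < D := by rw [hD]; positivity
  have h1 : I ≤ (4 * (F (Θ 0) - Fstar)
      + (2 * η0 * (γ + β ^ 2) + 6 * L * η0 ^ 2 * (γ ^ 2 + β ^ 4)) * B * T) / (D * T) := by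
    rw [le_div_iff₀ (by positivity)]
    have hexp : cc = D / 4 := by rw [hcc, hD]
    rw [hexp] at hchain
    rw [hK] at hchain
    nlinarith [hchain]
  have h2 : (4 * (F (Θ 0) - Fstar)
      + (2 * η0 * (γ + β ^ 2) + 6 * L * η0 ^ 2 * (γ ^ 2 + β ^ 4)) * B * T) / (D * T)
      = 4 * (F (Θ 0) - Fstar) / (D * T)
        + (2 * η0 * (γ + β ^ 2) + 6 * L * η0 ^ 2 * (γ ^ 2 + β ^ 4)) * B / D := by
    rw [add_div]
    congr 1
    exact mul_div_mul_right _ _ (ne_of_gt hTpos)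
  rw [h2] at h1
  exact h1
end

section
/- Let E be a real inner product space, β ∈ [0,1), and g : ℕ → E. Define m_t = Σ_{i=0}^{t−1} β^i·g_{t−1−i}. Suppose there are c, G' ≥ 0 with ‖g_i − g_j‖ ≤ c for all i, j and ‖g_t‖ ≤ G' for all t. Then for every t, ‖m_t − g_t/(1−β)‖ ≤ (c·(1−β^t) + G'·β^t)/(1−β), and in particular ‖m_t − g_t/(1−β)‖² ≤ ((c + G')/(1−β))². -/
open Finset

/-- The global momentum buffer `m_t = ∑_{i<t} β^i g_{t-1-i}` stays close to
`g_t / (1 - β)` when consecutive gradients are close and bounded. -/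
theorem global_momentum_deviation
    {E : Type*} [NormedAddCommGroup E] [InnerProductSpace ℝ E]
    (β : ℝ) (hβ0 : 0 ≤ β) (hβ1 : β < 1)
    (g : ℕ → E) (c G' : ℝ) (hc : 0 ≤ c) (hG' : 0 ≤ G')
    (hdiff : ∀ i j : ℕ, ‖g i - g j‖ ≤ c) (hbdd : ∀ t : ℕ, ‖g t‖ ≤ G')
    (m : ℕ → E) (hm : ∀ t : ℕ, m t = ∑ i ∈ Finset.range t, β ^ i • g (t - 1 - i)) :
    ∀ t : ℕ,
      ‖m t - (1 - β)⁻¹ • g t‖ ≤ (c * (1 - β ^ t) + G' * β ^ t) / (1 - β) ∧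
        ‖m t - (1 - β)⁻¹ • g t‖ ^ 2 ≤ ((c + G') / (1 - β)) ^ 2 := by
  intro t
  have hβne : (1 : ℝ) - β ≠ 0 := by linarith
  have hβpos : (0 : ℝ) < 1 - β := by linarith
  have hβt0 : (0 : ℝ) ≤ β ^ t := pow_nonneg hβ0 t
  have hβt1 : β ^ t ≤ 1 := pow_le_one₀ hβ0 hβ1.le
  have hgeom : ∑ i ∈ Finset.range t, β ^ i = (1 - β ^ t) / (1 - β) := by
    rw [geom_sum_eq (by linarith : β ≠ 1), div_eq_div_iff (by linarith) (by linarith)]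
    ring
  have hdecomp : m t - (1 - β)⁻¹ • g t =
      (∑ i ∈ Finset.range t, β ^ i • (g (t - 1 - i) - g t))
        - ((1 - β)⁻¹ * β ^ t) • g t := by
    rw [hm t]
    have h1 : ∑ i ∈ Finset.range t, β ^ i • (g (t - 1 - i) - g t)
        = (∑ i ∈ Finset.range t, β ^ i • g (t - 1 - i))
          - ((1 - β ^ t) / (1 - β)) • g t := by
      rw [← hgeom, Finset.sum_smul, ← Finset.sum_sub_distrib]
      exact Finset.sum_congr rfl fun i _ => smul_sub _ _ _
    have h2 : ((1 - β ^ t) / (1 - β)) • g t + ((1 - β)⁻¹ * β ^ t) • g t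
        = (1 - β)⁻¹ • g t := by
      rw [← add_smul]
      congr 1
      field_simp
      ring
    rw [h1, sub_sub, h2]
  have hbound : ‖m t - (1 - β)⁻¹ • g t‖ ≤ (c * (1 - β ^ t) + G' * β ^ t) / (1 - β) := by
    rw [hdecomp]
    calc ‖(∑ i ∈ Finset.range t, β ^ i • (g (t - 1 - i) - g t))
            - ((1 - β)⁻¹ * β ^ t) • g t‖
        ≤ ‖∑ i ∈ Finset.range t, β ^ i • (g (t - 1 - i) - g t)‖
            + ‖((1 - β)⁻¹ * β ^ t) • g t‖ := norm_sub_le _ _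
      _ ≤ (∑ i ∈ Finset.range t, β ^ i * c) + (1 - β)⁻¹ * β ^ t * G' := by
          gcongr
          · calc ‖∑ i ∈ Finset.range t, β ^ i • (g (t - 1 - i) - g t)‖
                ≤ ∑ i ∈ Finset.range t, ‖β ^ i • (g (t - 1 - i) - g t)‖ :=
                  norm_sum_le _ _
              _ ≤ ∑ i ∈ Finset.range t, β ^ i * c := by
                  apply Finset.sum_le_sum
                  intro i _
                  rw [norm_smul, Real.norm_eq_abs, abs_of_nonneg (pow_nonneg hβ0 i)]
                  exact mul_le_mul_of_nonneg_left (hdiff _ _) (pow_nonneg hβ0 i)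
          · rw [norm_smul, Real.norm_eq_abs,
              abs_of_nonneg (mul_nonneg (inv_nonneg.2 hβpos.le) hβt0)]
            exact mul_le_mul_of_nonneg_left (hbdd t) (mul_nonneg (inv_nonneg.2 hβpos.le) hβt0)
      _ = (c * (1 - β ^ t) + G' * β ^ t) / (1 - β) := by
          rw [← Finset.sum_mul, hgeom]
          field_simp
  refine ⟨hbound, ?_⟩
  have h2 : (c * (1 - β ^ t) + G' * β ^ t) / (1 - β) ≤ (c + G') / (1 - β) := by
    gcongr
    · nlinarith
    · nlinarith
  exact pow_le_pow_left₀ (norm_nonneg _) (hbound.trans h2) 2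
end
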